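/- arXiv:1505.07203 — 2 statements merged into one kernel-verified Lean document; each statement's English description precedes it below -/
import Mathlib

section
/- For any saliency map w on a finite connected graph G, the saliency map of the quasi-flat zones hierarchy of (G,w) is w itself: Φ(QFZ(G,w)) = w. -/
open SimpleGraph

variable {V : Type*}

/-- `P'` refines `P`: every region of `P'` is contained in a region of `P`. -/
def Refines (P' P : Set (Set V)) : Prop := ∀ R ∈ P', ∃ S ∈ P, R ⊆ S

/-- `x` and `y` lie in the same region of `P`. -/
def SameRegion (P : Set (Set V)) (x y : V) : Prop := ∃ R ∈ P, x ∈ R ∧ y ∈ R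

/-- The cut of a partition `P` for the graph `G`. -/
def cutOf (G : SimpleGraph V) (P : Set (Set V)) : Set (Sym2 V) :=
  {e | e ∈ G.edgeSet ∧ ∀ x y : V, e = s(x, y) → ¬ SameRegion P x y}

/-- The `lam`-level partition of a subgraph `X`: connected components of the
`lam`-level graph `(V(X), {u ∈ E(X) : w u < lam})`, as a set of regions. -/
def levelPartition {G : SimpleGraph V} (X : G.Subgraph) {α : Type*} [LT α]
    (w : Sym2 V → α) (lam : α) : Set (Set V) :=
  {S | ∃ x ∈ X.verts,
    S = {y | Relation.ReflTransGen (fun a b => X.Adj a b ∧ w s(a, b) < lam) x y}}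

/-- The `lam`-level partition of the graph `G` itself (quasi-flat zones at level `lam`). -/
def qfz (G : SimpleGraph V) (w : Sym2 V → ℕ) (lam : ℕ) : Set (Set V) :=
  {S | ∃ x : V,
    S = {y | Relation.ReflTransGen (fun a b => G.Adj a b ∧ w s(a, b) < lam) x y}}

/-- `(P₀, …, P_l)` is a complete hierarchy on `V`. -/
def IsCompleteHierarchy (P : ℕ → Set (Set V)) (l : ℕ) : Prop :=
  (∀ i ≤ l, Setoid.IsPartition (P i)) ∧
  (∀ i, 1 ≤ i → i ≤ l → Refines (P (i - 1)) (P i)) ∧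
  (P 0 = {S | ∃ x : V, S = {x}}) ∧
  (P l = {Set.univ})

/-- A complete hierarchy all of whose regions induce connected subgraphs of `G`. -/
def IsConnectedHierarchy (G : SimpleGraph V) (P : ℕ → Set (Set V)) (l : ℕ) : Prop :=
  IsCompleteHierarchy P l ∧ ∀ i ≤ l, ∀ S ∈ P i, (G.induce S).Connected

/-- The saliency map of the hierarchy `(P₀, …, P_l)`:
`Φ(H)(u) = max {lam ≤ l : u ∈ φ(P lam)}`. -/
noncomputable def saliency (G : SimpleGraph V) (P : ℕ → Set (Set V)) (l : ℕ)
    (e : Sym2 V) : ℕ :=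
  sSup {lam | lam ≤ l ∧ e ∈ cutOf G (P lam)}

/-- `w` is a saliency map on `G`: the saliency map of some connected complete
hierarchy of depth `|E|`. -/
def IsSaliencyMap (G : SimpleGraph V) [Fintype G.edgeSet] (w : Sym2 V → ℕ) : Prop :=
  ∃ P : ℕ → Set (Set V), IsConnectedHierarchy G P G.edgeFinset.card ∧
    ∀ e ∈ G.edgeSet, w e = saliency G P G.edgeFinset.card e

/-- Total weight of a subgraph. -/
noncomputable def sgWeight [Fintype V] {G : SimpleGraph V} {α : Type*}
    [AddCommMonoid α] (X : G.Subgraph) (w : Sym2 V → α) : α :=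
  ∑ e ∈ (Set.toFinite X.edgeSet).toFinset, w e

/-- `X` is a minimum spanning tree of `(G, w)`. -/
def IsMST [Fintype V] {G : SimpleGraph V} {α : Type*} [AddCommMonoid α] [Preorder α]
    (X : G.Subgraph) (w : Sym2 V → α) : Prop :=
  X.verts = Set.univ ∧ X.Connected ∧
  ∀ Y : G.Subgraph, Y.verts = Set.univ → Y.Connected → sgWeight X w ≤ sgWeight Y w

private lemma sameRegion_symm {P : Set (Set V)} {a b : V} (h : SameRegion P a b) :
    SameRegion P b a := by obtain ⟨R, hR, ha, hb⟩ := h; exact ⟨R, hR, hb, ha⟩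

private lemma sameRegion_trans {P : Set (Set V)} (hP : Setoid.IsPartition P) {a b c : V}
    (h1 : SameRegion P a b) (h2 : SameRegion P b c) : SameRegion P a c := by
  obtain ⟨R, hR, ha, hb⟩ := h1
  obtain ⟨S, hS, hb', hc⟩ := h2
  obtain ⟨T, hT, hu⟩ := hP.2 b
  have hRT : R = T := hu R ⟨hR, hb⟩
  have hST : S = T := hu S ⟨hS, hb'⟩
  have hSR : S = R := hST.trans hRT.symm
  exact ⟨R, hR, ha, hSR ▸ hc⟩

private lemma wsymm {G : SimpleGraph V} {w : Sym2 V → ℕ} {lam : ℕ} :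
    Symmetric (fun p q => G.Adj p q ∧ w s(p, q) < lam) := by
  rintro p q ⟨h1, h2⟩
  exact ⟨h1.symm, by rwa [Sym2.eq_swap]⟩

private lemma sameRegion_qfz_iff {G : SimpleGraph V} {w : Sym2 V → ℕ} {lam : ℕ} {a b : V} :
    SameRegion (qfz G w lam) a b ↔
      Relation.ReflTransGen (fun p q => G.Adj p q ∧ w s(p, q) < lam) a b := by
  constructor
  · rintro ⟨R, ⟨z, hz⟩, ha, hb⟩
    subst hz
    exact ((@Relation.ReflTransGen.symmetric _ _ ⟨wsymm⟩).symm _ _ ha).trans hb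
  · intro h
    exact ⟨_, ⟨a, rfl⟩, Relation.ReflTransGen.refl, h⟩

/-- `Φ(QFZ(G, w)) = w` for any saliency map `w`. -/
theorem saliency_qfz_eq [Fintype V] (G : SimpleGraph V) [Fintype G.edgeSet]
    (hG : G.Connected) (w : Sym2 V → ℕ) (hw : IsSaliencyMap G w) :
    ∀ e ∈ G.edgeSet, saliency G (qfz G w) G.edgeFinset.card e = w e := by
  obtain ⟨P, ⟨⟨hPart, -, -, -⟩, -⟩, hsal⟩ := hw
  intro e he
  induction e using Sym2.ind with
  | _ x y =>
  have hadj : G.Adj x y := G.mem_edgeSet.mp he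
  set μ := w s(x, y) with hμ
  have hwle : ∀ f ∈ G.edgeSet, w f ≤ G.edgeFinset.card := by
    intro f hf
    rw [hsal f hf]
    exact csSup_le' (fun a ha => ha.1)
  have hkey : ¬ Relation.ReflTransGen (fun a b => G.Adj a b ∧ w s(a, b) < μ) x y := by
    rcases Nat.eq_zero_or_pos μ with h0 | hpos
    · intro h
      rcases h.cases_head with rfl | ⟨z, ⟨_, hz⟩, _⟩
      · exact hadj.ne rfl
      · omega
    · have hmem : μ ∈ {lam | lam ≤ G.edgeFinset.card ∧ s(x, y) ∈ cutOf G (P lam)} := by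
        have hne : {lam | lam ≤ G.edgeFinset.card ∧ s(x, y) ∈ cutOf G (P lam)}.Nonempty := by
          by_contra hempty
          rw [Set.not_nonempty_iff_eq_empty] at hempty
          have hz : μ = 0 := by
            rw [hμ, hsal _ he]
            unfold saliency
            rw [hempty, csSup_empty]
            rfl
          omega
        have hmem' := Nat.sSup_mem hne ⟨G.edgeFinset.card, fun a ha => ha.1⟩
        have heq : μ = sSup {lam | lam ≤ G.edgeFinset.card ∧ s(x, y) ∈ cutOf G (P lam)} := by
          rw [hμ, hsal _ he]; rfl
        rwa [heq]
      intro h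
      have hμl : μ ≤ G.edgeFinset.card := hmem.1
      have hstep : ∀ p q : V,
          Relation.ReflTransGen (fun a b => G.Adj a b ∧ w s(a, b) < μ) p q →
          SameRegion (P μ) p q := by
        have hcover : ∀ a : V, SameRegion (P μ) a a := by
          intro a
          obtain ⟨R, ⟨hR, haR⟩, -⟩ := (hPart μ hμl).2 a
          exact ⟨R, hR, haR, haR⟩
        intro p q hpq
        induction hpq with
        | refl => exact hcover p
        | @tail b c hab hbc ih =>
          have hbc' : G.Adj b c := hbc.1
          have hbcE : s(b, c) ∈ G.edgeSet := G.mem_edgeSet.mpr hbc'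
          have hnotcut : s(b, c) ∉ cutOf G (P μ) := by
            intro hcut
            have hle : μ ≤ w s(b, c) := by
              rw [hsal _ hbcE]
              exact le_csSup ⟨G.edgeFinset.card, fun a ha => ha.1⟩ ⟨hμl, hcut⟩
            have := hbc.2
            omega
          have hex : ∃ a' b' : V, s(b, c) = s(a', b') ∧ SameRegion (P μ) a' b' := by
            by_contra hcon
            push_neg at hcon
            exact hnotcut ⟨hbcE, hcon⟩
          obtain ⟨a', b', hab2, hsr⟩ := hex
          rw [Sym2.eq_iff] at hab2
          have hsbc : SameRegion (P μ) b c := by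
            rcases hab2 with ⟨rfl, rfl⟩ | ⟨rfl, rfl⟩
            · exact hsr
            · exact sameRegion_symm hsr
          exact sameRegion_trans (hPart μ hμl) ih hsbc
      exact hmem.2.2 x y rfl (hstep x y h)
  unfold saliency
  apply le_antisymm
  · apply csSup_le'
    rintro lam ⟨hlaml, hcut⟩
    by_contra hlt
    push_neg at hlt
    exact hcut.2 x y rfl (sameRegion_qfz_iff.mpr
      (Relation.ReflTransGen.single ⟨hadj, hlt⟩))
  · apply le_csSup ⟨G.edgeFinset.card, fun a ha => ha.1⟩
    refine ⟨hwle _ he, he, ?_⟩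
    intro a b hab hsame
    rw [sameRegion_qfz_iff] at hsame
    rw [Sym2.eq_iff] at hab
    apply hkey
    rcases hab with ⟨rfl, rfl⟩ | ⟨rfl, rfl⟩
    · exact hsame
    · exact (@Relation.ReflTransGen.symmetric _ _ ⟨wsymm⟩).symm _ _ hsame
end

section
/- Let G be a finite connected graph, H a connected complete hierarchy of depth |E| on V(G), and w : E → {0,…,|E|−1}. Then w is the saliency map of H if and only if (1) QFZ(G,w) = H, and (2) w is minimal with this property: for any w' ≤ w pointwise with QFZ(G,w') = H, one has w' = w. -/
open SimpleGraph

variable {V : Type*}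

section Aux

variable {G : SimpleGraph V}

private lemma region_unique {P : Set (Set V)} (h : Setoid.IsPartition P)
    {R S : Set V} (hR : R ∈ P) (hS : S ∈ P) {x : V} (hxR : x ∈ R) (hxS : x ∈ S) :
    R = S := by
  obtain ⟨T, -, hT⟩ := h.2 x
  rw [hT R ⟨hR, hxR⟩, hT S ⟨hS, hxS⟩]

private lemma sameRegion_symm_s7 {P : Set (Set V)} {x y : V} :
    SameRegion P x y → SameRegion P y x := fun ⟨R, hR, hx, hy⟩ => ⟨R, hR, hy, hx⟩

private lemma sameRegion_mono {P : ℕ → Set (Set V)} {l : ℕ}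
    (hP : IsCompleteHierarchy P l) {μ lam : ℕ} (hμ : μ ≤ lam) (hl : lam ≤ l) {x y : V} :
    SameRegion (P μ) x y → SameRegion (P lam) x y := by
  induction lam, hμ using Nat.le_induction with
  | base => exact id
  | succ n hn ih =>
    intro h
    obtain ⟨R, hR, hx, hy⟩ := ih (by omega) h
    obtain ⟨S, hS, hRS⟩ := hP.2.1 (n + 1) (by omega) hl R (by simpa using hR)
    exact ⟨S, hS, hRS hx, hRS hy⟩

private lemma wrel_symm (w : Sym2 V → ℕ) (lam : ℕ) :
    Symmetric (fun a b => G.Adj a b ∧ w s(a, b) < lam) := by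
  rintro a b ⟨h1, h2⟩
  exact ⟨h1.symm, by rwa [Sym2.eq_swap]⟩

/-- If edges below level `lam` are exactly the intra-region edges of a partition
into connected regions, then the quasi-flat zones at level `lam` are that partition. -/
private lemma qfz_eq_of_levelCrit {Q : Set (Set V)}
    (hpart : Setoid.IsPartition Q)
    (hconn : ∀ S ∈ Q, (G.induce S).Connected)
    (w : Sym2 V → ℕ) (lam : ℕ)
    (hcrit : ∀ a b : V, G.Adj a b → (w s(a, b) < lam ↔ SameRegion Q a b)) :
    qfz G w lam = Q := by
  have walkstep : ∀ (S : Set V), S ∈ Q → ∀ (u v : ↥S), (G.induce S).Walk u v →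
      Relation.ReflTransGen (fun a b => G.Adj a b ∧ w s(a, b) < lam) u.1 v.1 := by
    intro S hS u v p
    induction p with
    | nil => exact .refl
    | @cons a b c h _ ih =>
      have hadj : G.Adj a.1 b.1 := by simpa using h
      exact Relation.ReflTransGen.head ⟨hadj, (hcrit _ _ hadj).mpr ⟨S, hS, a.2, b.2⟩⟩ ih
  have key : ∀ x : V, ∀ S ∈ Q, x ∈ S →
      {y | Relation.ReflTransGen (fun a b => G.Adj a b ∧ w s(a, b) < lam) x y} = S := by
    intro x S hS hxS
    ext y
    constructor
    · intro hy
      induction hy with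
      | refl => exact hxS
      | tail _ hstep ih =>
        obtain ⟨R, hR, h1, h2⟩ := (hcrit _ _ hstep.1).mp hstep.2
        exact region_unique hpart hR hS h1 ih ▸ h2
    · intro hyS
      obtain ⟨p⟩ := (hconn S hS).preconnected ⟨x, hxS⟩ ⟨y, hyS⟩
      exact walkstep S hS _ _ p
  ext S
  constructor
  · rintro ⟨x, rfl⟩
    obtain ⟨R, ⟨hR, hxR⟩, -⟩ := hpart.2 x
    rw [key x R hR hxR]
    exact hR
  · intro hS
    have hne : S.Nonempty := Set.nonempty_iff_ne_empty.mpr fun h => hpart.1 (h ▸ hS)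
    obtain ⟨x, hx⟩ := hne
    exact ⟨x, (key x S hS hx).symm⟩

private lemma saliency_mem {P : ℕ → Set (Set V)} {l : ℕ}
    (hP : IsCompleteHierarchy P l) {e : Sym2 V} (he : e ∈ G.edgeSet) :
    saliency G P l e ≤ l ∧ e ∈ cutOf G (P (saliency G P l e)) := by
  have h0 : 0 ∈ {lam | lam ≤ l ∧ e ∈ cutOf G (P lam)} := by
    refine ⟨Nat.zero_le l, he, ?_⟩
    rintro x y rfl ⟨R, hR, hx, hy⟩
    rw [hP.2.2.1] at hR
    obtain ⟨z, rfl⟩ := hR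
    have hadj : G.Adj x y := he
    exact hadj.ne (hx.trans hy.symm)
  exact Nat.sSup_mem ⟨0, h0⟩ ⟨l, fun n hn => hn.1⟩

private lemma le_saliency {P : ℕ → Set (Set V)} {l lam : ℕ} {e : Sym2 V}
    (hlam : lam ≤ l) (hcut : e ∈ cutOf G (P lam)) : lam ≤ saliency G P l e :=
  le_csSup ⟨l, fun n hn => hn.1⟩ ⟨hlam, hcut⟩

private lemma crit_of_saliency {P : ℕ → Set (Set V)} {l : ℕ}
    (hP : IsCompleteHierarchy P l) {w : Sym2 V → ℕ}
    (hsal : ∀ e ∈ G.edgeSet, w e = saliency G P l e)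
    {lam : ℕ} (hlam : lam ≤ l) {a b : V} (hab : G.Adj a b) :
    w s(a, b) < lam ↔ SameRegion (P lam) a b := by
  have he : s(a, b) ∈ G.edgeSet := hab
  rw [hsal _ he]
  constructor
  · intro h
    by_contra hnot
    have hcut : s(a, b) ∈ cutOf G (P lam) := by
      refine ⟨he, ?_⟩
      intro x y hxy hsame
      rcases Sym2.eq_iff.mp hxy with ⟨rfl, rfl⟩ | ⟨rfl, rfl⟩
      · exact hnot hsame
      · exact hnot (sameRegion_symm_s7 hsame)
    exact absurd (le_saliency hlam hcut) (by omega)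
  · intro hsame
    by_contra h
    push_neg at h
    obtain ⟨hsl, hscut⟩ := saliency_mem hP he
    exact hscut.2 a b rfl (sameRegion_mono hP h hsl hsame)

private lemma same_iff_reach {Q : Set (Set V)} {w : Sym2 V → ℕ} {lam : ℕ}
    (hq : qfz G w lam = Q) {a b : V} :
    SameRegion Q a b ↔
      Relation.ReflTransGen (fun x y => G.Adj x y ∧ w s(x, y) < lam) a b := by
  constructor
  · rintro ⟨R, hR, ha, hb⟩
    rw [← hq] at hR
    obtain ⟨x, rfl⟩ := hR
    have : Std.Symm (fun a b => G.Adj a b ∧ w s(a, b) < lam) := ⟨fun _ _ h => wrel_symm w lam h⟩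
    exact ((Relation.ReflTransGen.symmetric).symm _ _ ha).trans hb
  · intro h
    refine ⟨_, ?_, Relation.ReflTransGen.refl, h⟩
    rw [← hq]
    exact ⟨a, rfl⟩

private lemma qfz_congr {w1 w2 : Sym2 V → ℕ} {lam : ℕ}
    (h : ∀ x y, Relation.ReflTransGen (fun a b => G.Adj a b ∧ w1 s(a, b) < lam) x y ↔
         Relation.ReflTransGen (fun a b => G.Adj a b ∧ w2 s(a, b) < lam) x y) :
    qfz G w1 lam = qfz G w2 lam := by
  ext S
  constructor
  · rintro ⟨x, rfl⟩
    exact ⟨x, Set.ext fun y => (h x y)⟩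
  · rintro ⟨x, rfl⟩
    exact ⟨x, Set.ext fun y => (h x y).symm⟩

private lemma rtg_iff {α : Type*} {r r' : α → α → Prop} (h1 : ∀ a b, r a b → r' a b)
    (h2 : ∀ a b, r' a b → Relation.ReflTransGen r a b) (a b : α) :
    Relation.ReflTransGen r' a b ↔ Relation.ReflTransGen r a b := by
  constructor
  · intro h
    induction h with
    | refl => exact .refl
    | tail _ hstep ih => exact ih.trans (h2 _ _ hstep)
  · intro h
    exact Relation.ReflTransGen.mono (fun x y hxy => h1 x y hxy) a b h

end Aux

/-- `w` is the saliency map of `H` iff `QFZ(G, w) = H` and `w` is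
minimal with this property. -/
theorem saliency_characterization [Fintype V] (G : SimpleGraph V) [Fintype G.edgeSet]
    (hG : G.Connected) (P : ℕ → Set (Set V))
    (hP : IsConnectedHierarchy G P G.edgeFinset.card)
    (w : Sym2 V → ℕ) (hw : ∀ e ∈ G.edgeSet, w e < G.edgeFinset.card) :
    (∀ e ∈ G.edgeSet, w e = saliency G P G.edgeFinset.card e) ↔
      ((∀ lam ≤ G.edgeFinset.card, qfz G w lam = P lam) ∧
        ∀ w' : Sym2 V → ℕ, (∀ e ∈ G.edgeSet, w' e ≤ w e) →
          (∀ lam ≤ G.edgeFinset.card, qfz G w' lam = P lam) →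
          ∀ e ∈ G.edgeSet, w' e = w e) := by
  classical
  set l := G.edgeFinset.card with hl
  constructor
  · intro hsal
    have hq : ∀ lam ≤ l, qfz G w lam = P lam := by
      intro lam hlam
      exact qfz_eq_of_levelCrit (hP.1.1 lam hlam) (hP.2 lam hlam) w lam
        (fun a b hab => crit_of_saliency hP.1 hsal hlam hab)
    refine ⟨hq, ?_⟩
    intro w' hle hq' e
    induction e using Sym2.ind with
    | _ a b =>
    intro he
    by_contra hne
    have hadj : G.Adj a b := he
    have hlt : w' s(a, b) < w s(a, b) := lt_of_le_of_ne (hle _ he) hne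
    have hwl : w s(a, b) ≤ l := le_of_lt (hw _ he)
    -- at level lam = w s(a,b), endpoints are in distinct regions but w'-connected
    have hcut : s(a, b) ∈ cutOf G (P (w s(a, b))) := by
      have := (saliency_mem hP.1 he).2
      rwa [← hsal _ he] at this
    have hsame : SameRegion (P (w s(a, b))) a b := by
      rw [same_iff_reach (hq' _ hwl)]
      exact Relation.ReflTransGen.single ⟨hadj, hlt⟩
    exact hcut.2 a b rfl hsame
  · rintro ⟨hq, hmin⟩ e
    induction e using Sym2.ind with
    | _ a b =>
    intro he
    have hadj : G.Adj a b := he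
    set s := saliency G P l s(a, b) with hs
    obtain ⟨hsl, hscut⟩ := saliency_mem hP.1 he
    -- Step A: s ≤ w s(a,b)
    have hge : s ≤ w s(a, b) := by
      by_contra h
      push_neg at h
      have : SameRegion (P s) a b := by
        rw [same_iff_reach (hq s hsl)]
        exact Relation.ReflTransGen.single ⟨hadj, h⟩
      exact hscut.2 a b rfl this
    -- Step B: the modified map
    set w'' : Sym2 V → ℕ := fun u => if u = s(a, b) then s else w u with hw''
    have hw''e : w'' s(a, b) = s := by simp [hw'']
    have hle'' : ∀ u, w'' u ≤ w u := by
      intro u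
      by_cases hu : u = s(a, b)
      · subst hu; simpa [hw''] using hge
      · simp [hw'', hu]
    have hq'' : ∀ lam ≤ l, qfz G w'' lam = P lam := by
      intro lam hlam
      rw [← hq lam hlam]
      rcases le_or_gt lam s with hcase | hcase
      · -- levels at most s : relations coincide
        refine qfz_congr (fun x y => ?_)
        refine rtg_iff (fun p q hpq => ⟨hpq.1, ?_⟩)
          (fun p q hpq => Relation.ReflTransGen.single ⟨hpq.1, ?_⟩) x y
        · -- w < lam → w'' < lam
          by_cases hu : s(p, q) = s(a, b)
          · have h2 := hpq.2
            rw [hu] at h2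
            rw [hu, hw''e]
            omega
          · simpa [hw'', hu] using hpq.2
        · -- w'' < lam → w < lam
          by_cases hu : s(p, q) = s(a, b)
          · have h2 := hpq.2
            rw [hu, hw''e] at h2
            omega
          · have : w'' s(p, q) = w s(p, q) := by simp [hw'', hu]
            rw [← this]
            exact hpq.2
      · -- levels above s : the extra edge is already connected
        have hreach : Relation.ReflTransGen
            (fun x y => G.Adj x y ∧ w s(x, y) < lam) a b := by
          rw [← same_iff_reach (hq lam hlam)]
          by_contra hnot
          have hcut : s(a, b) ∈ cutOf G (P lam) := by
            refine ⟨he, ?_⟩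
            intro x y hxy hsame
            rcases Sym2.eq_iff.mp hxy with ⟨rfl, rfl⟩ | ⟨rfl, rfl⟩
            · exact hnot hsame
            · exact hnot (sameRegion_symm_s7 hsame)
          exact absurd (le_saliency hlam hcut) (by omega)
        refine qfz_congr (fun x y => rtg_iff ?_ ?_ x y)
        · intro p q hpq
          exact ⟨hpq.1, lt_of_le_of_lt (hle'' _) hpq.2⟩
        · intro p q hpq
          by_cases hu : s(p, q) = s(a, b)
          · rcases Sym2.eq_iff.mp hu with ⟨rfl, rfl⟩ | ⟨rfl, rfl⟩
            · exact hreach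
            · have : Std.Symm (fun x y => G.Adj x y ∧ w s(x, y) < lam) := ⟨fun _ _ h => wrel_symm w lam h⟩
              exact (Relation.ReflTransGen.symmetric).symm _ _ hreach
          · refine Relation.ReflTransGen.single ⟨hpq.1, ?_⟩
            have : w'' s(p, q) = w s(p, q) := by simp [hw'', hu]
            rw [← this]
            exact hpq.2
    have := hmin w'' (fun u _ => hle'' u) hq'' s(a, b) he
    rw [hw''e] at this
    exact this.symm
end
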